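/- For every cool stateful SOS specification L, the trace, cost, and termination semantics of L and of its reader–writer extension L² coincide: for every closed Θ-term p and every state s, trc_L(p)(s) = trc^r_{L²}(p)(s), cst_L(p)(s) = cst^r_{L²}(p)(s), and ter_L(p)(s) = ter^r_{L²}(p)(s). -/

import Mathlib

/-! # Statement 13: the trace, cost, and termination semantics of a cool stateful SOS specification L and of its reader–writer extension L² coincide -/
namespace RW

/-- A deterministic reader–writer transition system over a state set `S`:
`rstep p s = c` means `p,s → c`; `wstep c = .inl (d,s)` means `c →ˢ d`;
`wstep c = .inr (.inl d)` means `c → d`; `wstep c = .inr (.inr s)` means `c ↓ s`. -/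
structure DRW (S : Type) where
  Rd : Type
  Wr : Type
  rstep : Rd → S → Wr
  wstep : Wr → (Wr × S) ⊕ (Wr ⊕ S)

variable {S : Type}

/-- The output transition `c →ˢ d`. -/
def OutTr (M : DRW S) (c : M.Wr) (s : S) (d : M.Wr) : Prop := M.wstep c = .inl (d, s)

/-- The silent transition `c → d`. -/
def TauTr (M : DRW S) (c d : M.Wr) : Prop := M.wstep c = .inr (.inl d)

/-- The termination transition `c ↓ s`. -/
def DownTr (M : DRW S) (c : M.Wr) (s : S) : Prop := M.wstep c = .inr (.inr s)

/-- The weak silent transition `c ⇒ d`: a finite chain of silent steps. -/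
def WSil (M : DRW S) : M.Wr → M.Wr → Prop := Relation.ReflTransGen (TauTr M)

/-- The weak output transition `c ⇒ˢ d`: `c ⇒ c' →ˢ d` for some `c'`. -/
def WOut (M : DRW S) (c : M.Wr) (s : S) (d : M.Wr) : Prop :=
  ∃ c', WSil M c c' ∧ OutTr M c' s d

/-- The weak termination transition `c ⇓ s`: `c ⇒ c' ↓ s` for some `c'`. -/
def WDone (M : DRW S) (c : M.Wr) (s : S) : Prop :=
  ∃ c', WSil M c c' ∧ DownTr M c' s

/-- `ReachL M c l d`: from `c` there is a chain of weak output transitions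
producing the list `l` of states and ending in `d`. -/
def ReachL (M : DRW S) : M.Wr → List S → M.Wr → Prop
  | c, [], d => c = d
  | c, s :: l, d => ∃ c', WOut M c s c' ∧ ReachL M c' l d

/-- `TrcEntry M c n v` holds iff the `n`-th entry (0-indexed) of the trace
`trc^w(c)` is `v`, where `v = .inl s` tags an intermediate output state and
`v = .inr s` tags the final state of a finite trace. -/
def TrcEntry (M : DRW S) (c : M.Wr) (n : ℕ) (v : S ⊕ S) : Prop :=
  (∃ l d s d', ReachL M c l d ∧ l.length = n ∧ WOut M d s d' ∧ v = .inl s) ∨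
  (∃ l d s, ReachL M c l d ∧ l.length = n ∧ WDone M d s ∧ v = .inr s)

open Classical in
/-- The writer trace map `trc^w : X_w → 𝒮^∞`, with a (nonempty, finite or infinite)
trace encoded as a function `ℕ → Option (S ⊕ S)`: a finite trace `(s₁,…,sₙ,s)`
sends `0,…,n-1` to `some (.inl sᵢ₊₁)`, `n` to `some (.inr s)` and all larger
numbers to `none`; an infinite trace `(s₁,s₂,…)` sends each `n` to
`some (.inl sₙ₊₁)`. -/
noncomputable def trcW (M : DRW S) (c : M.Wr) : ℕ → Option (S ⊕ S) := fun n =>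
  if h : ∃ v, TrcEntry M c n v then some h.choose else none

/-- The reader trace map `trc^r : X_r → (𝒮^∞)^𝒮`: `trc^r(p)(s) = trc^w(c)` where
`p,s → c`. -/
noncomputable def trcR (M : DRW S) (p : M.Rd) (s : S) : ℕ → Option (S ⊕ S) :=
  trcW M (M.rstep p s)

open Classical in
/-- The writer cost map: `cstW M c = some (n,s)` iff `trc^w(c) = (s₁,…,sₙ,s)` is
finite, and `none` (i.e. `*`) iff `trc^w(c)` is infinite. -/
noncomputable def cstW (M : DRW S) (c : M.Wr) : Option (ℕ × S) :=
  if h : ∃ ns : ℕ × S, trcW M c ns.1 = some (.inr ns.2) then some h.choose else none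

/-- The reader cost map. -/
noncomputable def cstR (M : DRW S) (p : M.Rd) (s : S) : Option (ℕ × S) :=
  cstW M (M.rstep p s)

/-- The writer termination map: the last element of a finite trace, `none` (`*`)
for an infinite trace. -/
noncomputable def terW (M : DRW S) (c : M.Wr) : Option S := (cstW M c).map Prod.snd

/-- The reader termination map. -/
noncomputable def terR (M : DRW S) (p : M.Rd) (s : S) : Option S :=
  (cstR M p s).map Prod.snd

end RW
namespace SOS

/-- Terms over a single-sorted algebraic signature with operation symbols `O` of
arities `ar`, with variables from `V`. -/
inductive OTm (O : Type) (ar : O → ℕ) (V : Type) : Type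
  | var : V → OTm O ar V
  | op : (f : O) → (Fin (ar f) → OTm O ar V) → OTm O ar V

/-- Closed terms over the signature. -/
abbrev Tm (O : Type) (ar : O → ℕ) : Type := OTm O ar Empty

variable {O : Type} {ar : O → ℕ} {S : Type}

/-- Substitution of terms for variables. -/
def OTm.subst {V V' : Type} : OTm O ar V → (V → OTm O ar V') → OTm O ar V'
  | .var v, σ => σ v
  | .op f as, σ => .op f (fun i => (as i).subst σ)

/-- A cool stateful SOS specification over the signature `(O, ar)` and the state
set `S`, presented by its defining data.  For each operator `f`, either

* `f` is passive, given by the map `o : S → (t,s') ⊕ s'` assigning to the current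
  state `s` the conclusion of the (unique, premise-free) rule for `f` at `s`:
  either a transition `f(x₁,…,xₙ),s → t,s'` with `t` a term over the variables
  `x₁,…,xₙ`, or a termination `f(x₁,…,xₙ),s ↓ s'`; or
* `f` is active with receiving position `j`, and its rules are the patience rules
  `x_j,s → y_j,s'  ⊢  f(x₁,…,x_j,…,xₙ),s → f(x₁,…,y_j,…,xₙ),s'` together with the
  rules `x_j,s ↓ s'  ⊢  f(x₁,…,xₙ),s → t,s''` resp. `f(x₁,…,xₙ),s ↓ s''` whose
  conclusion `o s' = (t,s'') ⊕ s''` depends only on `s'` (not on `s`), where `t`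
  is a term over the variables `x₁,…,xₙ` other than `x_j`. -/
structure CoolSpec (O : Type) (ar : O → ℕ) (S : Type) where
  mode : (f : O) →
    (S → (OTm O ar (Fin (ar f)) × S) ⊕ S) ⊕
    (Σ j : Fin (ar f), S → (OTm O ar {i : Fin (ar f) // i ≠ j} × S) ⊕ S)

/-- Update of an argument tuple at position `j`. -/
def updFn {f : O} (as : Fin (ar f) → Tm O ar) (j : Fin (ar f)) (p : Tm O ar) :
    Fin (ar f) → Tm O ar :=
  fun i => if i = j then p else as i

/-- The operational model `γ^L` of the stateful SOS specification determined by a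
cool specification: `stepL C p s = .inl (p',s')` means `p,s → p',s'`, and
`stepL C p s = .inr s'` means `p,s ↓ s'`. -/
def stepL (C : CoolSpec O ar S) : Tm O ar → S → (Tm O ar × S) ⊕ S
  | .var v, _ => nomatch v
  | .op f as, s =>
    match C.mode f with
    | .inl o =>
        match o s with
        | .inl (t, s') => .inl (t.subst (fun i => as i), s')
        | .inr s' => .inr s'
    | .inr ⟨j, o⟩ =>
        match stepL C (as j) s with
        | .inl (p', s') => .inl (.op f (updFn as j p'), s')
        | .inr s' =>
            match o s' with
            | .inl (t, s'') => .inl (t.subst (fun i => as i.1), s'')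
            | .inr s'' => .inr s''

/-- Writers of the reader–writer extension `L²` of a cool specification `C`.
Readers are the closed `Θ`-terms. -/
inductive WTm (C : CoolSpec O ar S) : Type
  /-- The writer `[p]_s`. -/
  | run : Tm O ar → S → WTm C
  /-- The writer `ret_s`. -/
  | ret : S → WTm C
  /-- The writer `s.c`. -/
  | out : S → WTm C → WTm C
  /-- The writer `f̄(p₁,…,c,…,pₙ)` for an active operator `f` with receiving
  position `j` (with the writer argument in position `j`). -/
  | act : (f : O) → (j : Fin (ar f)) →
      (o : S → (OTm O ar {i : Fin (ar f) // i ≠ j} × S) ⊕ S) →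
      C.mode f = .inr ⟨j, o⟩ →
      ({i : Fin (ar f) // i ≠ j} → Tm O ar) → WTm C → WTm C

/-- The reader semantics of `L²`: `rstep2 C p s` is the unique writer `c` with
`p,s → c`. -/
def rstep2 (C : CoolSpec O ar S) (t : Tm O ar) (s : S) : WTm C :=
  match t with
  | .var v => nomatch v
  | .op f as =>
    match h : C.mode f with
    | .inl o =>
        match o s with
        | .inl (t', s') => .out s' (.run (t'.subst (fun i => as i)) s')
        | .inr s' => .ret s'
    | .inr ⟨j, o⟩ => .act f j o h (fun i => as i.1) (.run (as j) s)

/-- The writer semantics of `L²`: `wstep2 C c = .inl (d,s)` means `c →ˢ d`,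
`wstep2 C c = .inr (.inl d)` means `c → d`, and `wstep2 C c = .inr (.inr s)` means
`c ↓ s`. -/
def wstep2 (C : CoolSpec O ar S) : WTm C → (WTm C × S) ⊕ (WTm C ⊕ S)
  | .run p s => .inr (.inl (rstep2 C p s))
  | .ret s => .inr (.inr s)
  | .out s c => .inl (c, s)
  | .act f j o h ps c =>
      match wstep2 C c with
      | .inl (d, s) => .inl (.act f j o h ps d, s)
      | .inr (.inl d) => .inr (.inl (.act f j o h ps d))
      | .inr (.inr s') =>
          match o s' with
          | .inl (t, s'') => .inl (.run (t.subst (fun i => ps i)) s'', s'')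
          | .inr s'' => .inr (.inr s'')

/-- The operational model `γ^{L²}` of the reader–writer extension `L²` as a
deterministic reader–writer transition system. -/
def L2Model (C : CoolSpec O ar S) : RW.DRW S where
  Rd := Tm O ar
  Wr := WTm C
  rstep := rstep2 C
  wstep := wstep2 C

end SOS
namespace SOS

variable {O : Type} {ar : O → ℕ} {S : Type}

/-- Iterated execution of the operational model `γ^L`. -/
def runL (C : CoolSpec O ar S) : (Tm O ar × S) ⊕ S → ℕ → Option ((Tm O ar × S) ⊕ S)
  | c, 0 => some c
  | c, n+1 =>
      match runL C c n with
      | some (.inl (p, s)) => some (stepL C p s)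
      | _ => none

/-- The trace map of `γ^L`, encoding the (nonempty, finite or infinite) trace
`trc_L(p)(s)` as a function `ℕ → Option (S ⊕ S)`: the `n`-th entry is
`some (.inl sₙ₊₁)` for an intermediate state produced by `→`, `some (.inr s')` for
the final state produced by `↓`, and `none` beyond the end of a finite trace. -/
def trcL (C : CoolSpec O ar S) (p : Tm O ar) (s : S) : ℕ → Option (S ⊕ S) := fun n =>
  match runL C (.inl (p, s)) (n+1) with
  | some (.inl (_, s')) => some (.inl s')
  | some (.inr s') => some (.inr s')
  | none => none

open Classical in
/-- The cost map of `γ^L`: `cstL C p s = some (n,s')` iff `trc_L(p)(s) = (s₁,…,sₙ,s')`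
is finite, and `none` (i.e. `*`) iff it is infinite. -/
noncomputable def cstL (C : CoolSpec O ar S) (p : Tm O ar) (s : S) : Option (ℕ × S) :=
  if h : ∃ ns : ℕ × S, trcL C p s ns.1 = some (.inr ns.2) then some h.choose else none

/-- The termination map of `γ^L`: the last element of a finite trace, `none` (`*`)
for an infinite trace. -/
noncomputable def terL (C : CoolSpec O ar S) (p : Tm O ar) (s : S) : Option S :=
  (cstL C p s).map Prod.snd

end SOS

namespace SOS

open RW

variable {O : Type} {ar : O → ℕ} {S : Type}

section Generic

variable {M : DRW S}

lemma tau_det {c d d' : M.Wr} (h : TauTr M c d) (h' : TauTr M c d') : d = d' := by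
  unfold TauTr at h h'; rw [h] at h'; simp_all

lemma outTr_notTau {c : M.Wr} {s d} (h : OutTr M c s d) : ∀ e, ¬ TauTr M c e := by
  intro e he; unfold OutTr TauTr at *; rw [h] at he; simp_all

lemma downTr_notTau {c : M.Wr} {s} (h : DownTr M c s) : ∀ e, ¬ TauTr M c e := by
  intro e he; unfold DownTr TauTr at *; rw [h] at he; simp_all

lemma wsil_det {c a b : M.Wr} (h₁ : WSil M c a) (na : ∀ e, ¬ TauTr M a e)
    (h₂ : WSil M c b) (nb : ∀ e, ¬ TauTr M b e) : a = b := by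
  induction h₁ using Relation.ReflTransGen.head_induction_on with
  | refl =>
    rcases h₂.cases_head with rfl | ⟨e, he, _⟩
    · rfl
    · exact absurd he (na e)
  | head hstep hrest ih =>
    rcases h₂.cases_head with rfl | ⟨e, he, h₂'⟩
    · exact absurd hstep (nb _)
    · cases tau_det hstep he; exact ih h₂'

lemma wout_det {c : M.Wr} {s s' d d'} (h : WOut M c s d) (h' : WOut M c s' d') :
    s = s' ∧ d = d' := by
  obtain ⟨a, ha, hoa⟩ := h; obtain ⟨b, hb, hob⟩ := h'
  cases wsil_det ha (outTr_notTau hoa) hb (outTr_notTau hob)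
  unfold OutTr at hoa hob; rw [hoa] at hob; simp_all

lemma wdone_det {c : M.Wr} {s s'} (h : WDone M c s) (h' : WDone M c s') : s = s' := by
  obtain ⟨a, ha, hoa⟩ := h; obtain ⟨b, hb, hob⟩ := h'
  cases wsil_det ha (downTr_notTau hoa) hb (downTr_notTau hob)
  unfold DownTr at hoa hob; rw [hoa] at hob; simp_all

lemma wout_wdone {c : M.Wr} {s s' d} (h : WOut M c s d) (h' : WDone M c s') : False := by
  obtain ⟨a, ha, hoa⟩ := h; obtain ⟨b, hb, hob⟩ := h'
  cases wsil_det ha (outTr_notTau hoa) hb (downTr_notTau hob)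
  unfold OutTr at hoa; unfold DownTr at hob; rw [hoa] at hob; simp_all

lemma wout_tau {c c' : M.Wr} (h : TauTr M c c') (s : S) (d : M.Wr) :
    WOut M c s d ↔ WOut M c' s d := by
  constructor
  · rintro ⟨a, ha, hoa⟩
    rcases ha.cases_head with rfl | ⟨e, he, ha'⟩
    · exact absurd h (outTr_notTau hoa _)
    · cases tau_det h he; exact ⟨a, ha', hoa⟩
  · rintro ⟨a, ha, hoa⟩; exact ⟨a, ha.head h, hoa⟩

lemma wdone_tau {c c' : M.Wr} (h : TauTr M c c') (s : S) :
    WDone M c s ↔ WDone M c' s := by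
  constructor
  · rintro ⟨a, ha, hoa⟩
    rcases ha.cases_head with rfl | ⟨e, he, ha'⟩
    · exact absurd h (downTr_notTau hoa _)
    · cases tau_det h he; exact ⟨a, ha', hoa⟩
  · rintro ⟨a, ha, hoa⟩; exact ⟨a, ha.head h, hoa⟩

lemma wout_wsil {c c' : M.Wr} (h : WSil M c c') (s : S) (d : M.Wr) :
    WOut M c s d ↔ WOut M c' s d := by
  induction h with
  | refl => rfl
  | tail _ hstep ih => exact ih.trans (wout_tau hstep s d)

lemma wdone_wsil {c c' : M.Wr} (h : WSil M c c') (s : S) :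
    WDone M c s ↔ WDone M c' s := by
  induction h with
  | refl => rfl
  | tail _ hstep ih => exact ih.trans (wdone_tau hstep s)

lemma reachL_snoc : ∀ {l : List S} {c d e : M.Wr} {s : S},
    ReachL M c l d → WOut M d s e → ReachL M c (l ++ [s]) e := by
  intro l
  induction l with
  | nil => rintro c d e s rfl h; exact ⟨e, h, rfl⟩
  | cons s₀ l ih =>
    rintro c d e s ⟨c₁, h₁, h₂⟩ h
    exact ⟨c₁, h₁, ih h₂ h⟩

lemma reachL_drop : ∀ {l l' : List S} {c d d' : M.Wr},
    ReachL M c l d → ReachL M c l' d' → l.length ≤ l'.length →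
    ReachL M d (l'.drop l.length) d' := by
  intro l
  induction l with
  | nil => rintro l' c d d' rfl h _; exact h
  | cons s l ih =>
    rintro l' c d d' ⟨c₁, h₁, h₂⟩ h' hle
    match l' with
    | [] => simp at hle
    | s' :: l₂ =>
      obtain ⟨c₂, h₁', h₂'⟩ := h'
      obtain ⟨rfl, rfl⟩ := wout_det h₁ h₁'
      exact ih h₂ h₂' (by simpa using hle)

lemma trcEntry_unique {c : M.Wr} {n v v'} (h : TrcEntry M c n v)
    (h' : TrcEntry M c n v') : v = v' := by
  have key : ∀ {l l' : List S} {d d' : M.Wr}, ReachL M c l d → ReachL M c l' d' →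
      l.length = n → l'.length = n → d = d' := by
    intro l l' d d' h1 h2 e1 e2
    have := reachL_drop h1 h2 (by omega)
    rwa [show l'.drop l.length = [] by
      rw [List.drop_eq_nil_iff]; omega] at this
  rcases h with ⟨l, d, s, e, h1, hl, ho, rfl⟩ | ⟨l, d, s, h1, hl, ho, rfl⟩ <;>
    rcases h' with ⟨l', d', s', e', h1', hl', ho', rfl⟩ | ⟨l', d', s', h1', hl', ho', rfl⟩
  · cases key h1 h1' hl hl'; rw [(wout_det ho ho').1]
  · cases key h1 h1' hl hl'; exact absurd ho' (fun h => wout_wdone ho h)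
  · cases key h1 h1' hl hl'; exact absurd ho' (fun h => wout_wdone h ho)
  · cases key h1 h1' hl hl'; rw [wdone_det ho ho']

lemma no_entry_of_done {c : M.Wr} {l : List S} {d : M.Wr} {σ : S} {n : ℕ} {v}
    (hr : ReachL M c l d) (hd : WDone M d σ) (hn : l.length < n) :
    ¬ TrcEntry M c n v := by
  have key : ∀ {l' : List S} {d' : M.Wr}, ReachL M c l' d' → l'.length = n → False := by
    intro l' d' h1 e1
    have h2 := reachL_drop hr h1 (by omega)
    rcases hdrop : l'.drop l.length with _ | ⟨s₀, rest⟩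
    · have := congrArg List.length hdrop; simp at this; omega
    · rw [hdrop] at h2
      obtain ⟨c', hc', _⟩ := h2
      exact wout_wdone hc' hd
  rintro (⟨l', d', s, e, h1, hl, _, _⟩ | ⟨l', d', s, h1, hl, _, _⟩)
  · exact key h1 hl
  · exact key h1 hl

lemma trcW_eq_some {c : M.Wr} {n v} (hv : TrcEntry M c n v)
    (hu : ∀ v', TrcEntry M c n v' → v' = v) : trcW M c n = some v := by
  simp only [trcW]
  split
  · next h => exact congrArg some (hu _ h.choose_spec)
  · next h => exact absurd ⟨v, hv⟩ h

lemma trcW_eq_none {c : M.Wr} {n} (h : ∀ v, ¬ TrcEntry M c n v) : trcW M c n = none := by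
  simp only [trcW]
  split
  · next h' => exact absurd h'.choose_spec (h _)
  · rfl

end Generic

variable {C : CoolSpec O ar S}

lemma tau_run (p : Tm O ar) (s : S) :
    TauTr (L2Model C) (.run p s) (rstep2 C p s) := rfl

lemma tau_act {f : O} {j o ho} {ps} {c d : WTm C} (h : TauTr (L2Model C) c d) :
    TauTr (L2Model C) (.act f j o ho ps c) (.act f j o ho ps d) := by
  have h' : wstep2 C c = .inr (.inl d) := h
  show wstep2 C _ = _
  simp [wstep2, h']; rfl

lemma out_act {f : O} {j o ho} {ps} {c d : WTm C} {s : S}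
    (h : OutTr (L2Model C) c s d) :
    OutTr (L2Model C) (.act f j o ho ps c) s (.act f j o ho ps d) := by
  have h' : wstep2 C c = .inl (d, s) := h
  show wstep2 C _ = _
  simp [wstep2, h']; rfl

lemma wsil_act {f : O} {j o ho} {ps} {c d : WTm C} (h : WSil (L2Model C) c d) :
    WSil (L2Model C) (.act f j o ho ps c) (.act f j o ho ps d) :=
  Relation.ReflTransGen.lift (WTm.act f j o ho ps) (fun _ _ => tau_act) _ _ h

lemma rstep2_op (f : O) (as : Fin (ar f) → Tm O ar) (s : S) :
    rstep2 C (.op f as) s = (match h : C.mode f with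
      | .inl o =>
        match o s with
        | .inl (t', s') => WTm.out s' (.run (t'.subst fun i => as i) s')
        | .inr s' => .ret s'
      | .inr ⟨j, o⟩ => .act f j o h (fun i => as i.1) (.run (as j) s)) := rfl

lemma rstep2_passive {f : O} {as} {o} (h : C.mode f = .inl o) (s : S) :
    rstep2 C (.op f as) s = (match o s with
      | .inl (t', s') => WTm.out s' (.run (t'.subst fun i => as i) s')
      | .inr s' => .ret s') := by
  rw [rstep2_op]
  split
  · next o' heq => rw [h] at heq; cases heq; rfl
  · next j o' heq => rw [h] at heq; simp_all

lemma rstep2_active {f : O} {as} {j} {o} (h : C.mode f = .inr ⟨j, o⟩) (s : S) :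
    rstep2 C (.op f as) s = .act f j o h (fun i => as i.1) (.run (as j) s) := by
  rw [rstep2_op]
  split
  · next o' heq => rw [h] at heq; simp_all
  · next j' o' heq =>
    rw [h] at heq
    obtain ⟨rfl, ho⟩ : j = j' ∧ HEq o o' := by
      have := Sum.inr.inj heq
      exact ⟨congrArg Sigma.fst this, (Sigma.mk.inj_iff.mp this).2⟩
    cases eq_of_heq ho
    rfl

lemma step_sim (p : Tm O ar) : ∀ (s : S),
    (∀ p' s', stepL C p s = .inl (p', s') →
       ∃ c, WOut (L2Model C) (rstep2 C p s) s' c ∧ WSil (L2Model C) (.run p' s') c) ∧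
    (∀ s', stepL C p s = .inr s' → WDone (L2Model C) (rstep2 C p s) s') := by
  induction p with
  | var v => exact v.elim
  | op f as ih =>
    intro s
    cases hmode : C.mode f with
    | inl o =>
      rw [rstep2_passive hmode]
      cases ho : o s with
      | inl ts =>
        obtain ⟨t, s₀⟩ := ts
        constructor
        · intro p' s' hst
          unfold stepL at hst; simp only [hmode, ho] at hst
          obtain ⟨h1, h2⟩ : t.subst (fun i => as i) = p' ∧ s₀ = s' := by
            simpa using hst
          subst h1; subst h2
          exact ⟨.run (t.subst fun i => as i) s₀, ⟨_, Relation.ReflTransGen.refl, rfl⟩,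
            Relation.ReflTransGen.refl⟩
        · intro s' hst
          unfold stepL at hst; simp only [hmode, ho] at hst
          exact absurd hst (by simp)
      | inr s₀ =>
        constructor
        · intro p' s' hst
          unfold stepL at hst; simp only [hmode, ho] at hst
          exact absurd hst (by simp)
        · intro s' hst
          unfold stepL at hst; simp only [hmode, ho] at hst
          obtain rfl : s₀ = s' := by simpa using hst
          exact ⟨.ret s₀, Relation.ReflTransGen.refl, rfl⟩
    | inr jo =>
      obtain ⟨j, o⟩ := jo
      rw [rstep2_active hmode]
      cases hstep : stepL C (as j) s with
      | inl qs =>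
        obtain ⟨q, s'⟩ := qs
        obtain ⟨c, ⟨c', hsil, hout⟩, hrun⟩ := (ih j s).1 q s' hstep
        constructor
        · intro p' s'' hst
          unfold stepL at hst; simp only [hmode, hstep] at hst
          obtain ⟨h1, h2⟩ : OTm.op f (updFn as j q) = p' ∧ s' = s'' := by
            simpa using hst
          subst h1; subst h2
          refine ⟨.act f j o hmode (fun i => as i.1) c,
            ⟨.act f j o hmode (fun i => as i.1) c', ?_, out_act hout⟩, ?_⟩
          · exact (wsil_act hsil).head (tau_act (tau_run (as j) s))
          · have hre : rstep2 C (.op f (updFn as j q)) s' =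
                .act f j o hmode (fun i => as i.1) (.run q s') := by
              rw [rstep2_active hmode]
              congr 1
              · funext i
                simp [updFn, i.2]
              · simp [updFn]
            exact ((hre ▸ wsil_act hrun)).head (tau_run _ s')
        · intro s'' hst
          unfold stepL at hst; simp only [hmode, hstep] at hst
          exact absurd hst (by simp)
      | inr s' =>
        obtain ⟨c', hsil, hdn⟩ := (ih j s).2 s' hstep
        have hdn' : wstep2 C c' = .inr (.inr s') := hdn
        have hsil2 : WSil (L2Model C) (.act f j o hmode (fun i => as i.1) (.run (as j) s))
            (.act f j o hmode (fun i => as i.1) c') :=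
          (wsil_act hsil).head (tau_act (tau_run (as j) s))
        cases ho : o s' with
        | inl ts =>
          obtain ⟨t, s''⟩ := ts
          constructor
          · intro p' s₁ hst
            unfold stepL at hst; simp only [hmode, hstep, ho] at hst
            obtain ⟨h1, h2⟩ : t.subst (fun i => as i.1) = p' ∧ s'' = s₁ := by
              simpa using hst
            subst h1; subst h2
            refine ⟨.run (t.subst fun i => as i.1) s'', ⟨_, hsil2, ?_⟩,
              Relation.ReflTransGen.refl⟩
            show wstep2 C _ = _
            simp [wstep2, hdn', ho]; rfl
          · intro s₁ hst
            unfold stepL at hst; simp only [hmode, hstep, ho] at hst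
            exact absurd hst (by simp)
        | inr s'' =>
          constructor
          · intro p' s₁ hst
            unfold stepL at hst; simp only [hmode, hstep, ho] at hst
            exact absurd hst (by simp)
          · intro s₁ hst
            unfold stepL at hst; simp only [hmode, hstep, ho] at hst
            obtain rfl : s'' = s₁ := by simpa using hst
            refine ⟨_, hsil2, ?_⟩
            show wstep2 C _ = _
            simp [wstep2, hdn', ho]; rfl

lemma runL_succ_some {c x} {n : ℕ} (h : runL C c (n+1) = some x) :
    ∃ q σ, runL C c n = some (.inl (q, σ)) ∧ stepL C q σ = x := by
  unfold runL at h
  split at h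
  · next q σ heq => exact ⟨q, σ, heq, by injection h⟩
  · exact absurd h (by simp)

lemma reach_of_run : ∀ (n : ℕ) (p : Tm O ar) (s : S) (q : Tm O ar) (σ : S),
    runL C (.inl (p, s)) n = some (.inl (q, σ)) →
    ∃ l d, ReachL (L2Model C) (rstep2 C p s) l d ∧ l.length = n ∧
      WSil (L2Model C) (.run q σ) d := by
  intro n
  induction n with
  | zero =>
    intro p s q σ h
    obtain ⟨rfl, rfl⟩ : p = q ∧ s = σ := by
      simpa [runL] using h
    exact ⟨[], rstep2 C p s, rfl, rfl, Relation.ReflTransGen.single (tau_run p s)⟩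
  | succ n ihn =>
    intro p s q σ h
    obtain ⟨q₀, σ₀, hrun, hstep⟩ := runL_succ_some h
    obtain ⟨l, d, hre, hlen, hsil⟩ := ihn p s q₀ σ₀ hrun
    obtain ⟨c, hout, hrun'⟩ := (step_sim q₀ σ₀).1 q σ hstep
    have hout₁ : WOut (L2Model C) (.run q₀ σ₀) σ c := (wout_tau (tau_run q₀ σ₀) σ c).mpr hout
    have hout₂ : WOut (L2Model C) d σ c := (wout_wsil hsil σ c).mp hout₁
    exact ⟨l ++ [σ], c, reachL_snoc hre hout₂, by simp [hlen],
      hrun'.trans Relation.ReflTransGen.refl⟩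

lemma term_of_none (p : Tm O ar) (s : S) : ∀ (n : ℕ),
    runL C (.inl (p, s)) (n+1) = none →
    ∃ m q σ σ', m < n ∧ runL C (.inl (p, s)) m = some (.inl (q, σ)) ∧
      stepL C q σ = .inr σ' := by
  intro n
  induction n with
  | zero => intro h; simp [runL] at h
  | succ n ihn =>
    intro h
    have hh : runL C (.inl (p, s)) (n+2) =
        match runL C (.inl (p, s)) (n+1) with
        | some (.inl (q, σ)) => some (stepL C q σ)
        | _ => none := rfl
    rcases hprev : runL C (.inl (p, s)) (n+1) with _ | (⟨q, σ⟩ | σ')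
    · obtain ⟨m, q, σ, σ', hm, h1, h2⟩ := ihn hprev
      exact ⟨m, q, σ, σ', by omega, h1, h2⟩
    · rw [hh, hprev] at h; simp at h
    · obtain ⟨q, σ, h1, h2⟩ := runL_succ_some hprev
      exact ⟨n, q, σ, σ', by omega, h1, h2⟩

lemma entry_of_trcL {p : Tm O ar} {s : S} {n v} (h : trcL C p s n = some v) :
    TrcEntry (L2Model C) (rstep2 C p s) n v := by
  unfold trcL at h
  split at h
  · next r σ' heq =>
    cases h
    obtain ⟨q, σ, hrun, hstep⟩ := runL_succ_some heq
    obtain ⟨l, d, hre, hlen, hsil⟩ := reach_of_run n p s q σ hrun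
    obtain ⟨c, hout, _⟩ := (step_sim q σ).1 r σ' hstep
    have hout₂ : WOut (L2Model C) d σ' c :=
      (wout_wsil hsil σ' c).mp ((wout_tau (tau_run q σ) σ' c).mpr hout)
    exact Or.inl ⟨l, d, σ', c, hre, hlen, hout₂, rfl⟩
  · next σ' heq =>
    cases h
    obtain ⟨q, σ, hrun, hstep⟩ := runL_succ_some heq
    obtain ⟨l, d, hre, hlen, hsil⟩ := reach_of_run n p s q σ hrun
    have hdn := (step_sim q σ).2 σ' hstep
    have hdn₂ : WDone (L2Model C) d σ' :=
      (wdone_wsil hsil σ').mp ((wdone_tau (tau_run q σ) σ').mpr hdn)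
    exact Or.inr ⟨l, d, σ', hre, hlen, hdn₂, rfl⟩
  · next heq => cases h

lemma no_entry_of_trcL_none {p : Tm O ar} {s : S} {n v} (h : trcL C p s n = none) :
    ¬ TrcEntry (L2Model C) (rstep2 C p s) n v := by
  unfold trcL at h
  split at h
  · next heq => cases h
  · next heq => cases h
  · next heq =>
    obtain ⟨m, q, σ, σ', hm, h1, h2⟩ := term_of_none p s n heq
    obtain ⟨l, d, hre, hlen, hsil⟩ := reach_of_run m p s q σ h1
    have hdn := (step_sim q σ).2 σ' h2
    have hdn₂ : WDone (L2Model C) d σ' :=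
      (wdone_wsil hsil σ').mp ((wdone_tau (tau_run q σ) σ').mpr hdn)
    exact no_entry_of_done hre hdn₂ (by omega)

lemma trc_eq (C : CoolSpec O ar S) (p : Tm O ar) (s : S) :
    trcL C p s = trcR (L2Model C) p s := by
  funext n
  show trcL C p s n = trcW (L2Model C) (rstep2 C p s) n
  cases h : trcL C p s n with
  | some v =>
    exact (trcW_eq_some (entry_of_trcL h)
      (fun v' hv' => trcEntry_unique hv' (entry_of_trcL h))).symm
  | none =>
    exact (trcW_eq_none (fun v hv => no_entry_of_trcL_none h hv)).symm

/-- for every cool stateful SOS specification, every closed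
`Θ`-term `p` and every state `s`, the trace, cost and termination semantics of `p`
in the operational model `γ^L` and as a reader of `γ^{L²}` coincide. -/
theorem l_l2_semantics_coincide (C : CoolSpec O ar S) (p : Tm O ar) (s : S) :
    trcL C p s = trcR (L2Model C) p s ∧
    cstL C p s = cstR (L2Model C) p s ∧
    terL C p s = terR (L2Model C) p s := by
  have h := trc_eq C p s
  have h2 : cstL C p s = cstR (L2Model C) p s := by
    have h' : trcL C p s = trcW (L2Model C) (rstep2 C p s) := h
    show cstL C p s = cstW (L2Model C) (rstep2 C p s)
    unfold cstL cstW
    rw [h']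
  refine ⟨h, h2, ?_⟩
  unfold terL terR
  rw [h2]

end SOS
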